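/- Assume B : (0,∞) → [0,∞) is continuous and bounded on some neighborhood of 0 and satisfies (A2), and let U be a continuously differentiable Perron eigenfunction. Then for every m ∈ ℤ \ {0}, ∫₀^∞ x·exp((2imπ/log 2) log x) U(x) dx = 0; equivalently, ν_k(φ_l) = 1 if k = l and ν_k(φ_l) = 0 if k ≠ l, for all k, l ∈ ℤ. -/

import Mathlib

open MeasureTheory Real Set Filter Topology

noncomputable section

/-- A function on `(0,∞)` is locally bounded if it is bounded on the intersection of
`(0,∞)` with every bounded set. -/
def LocBddOn (f : ℝ → ℝ) : Prop :=
  ∀ r > 0, ∃ C, ∀ x, 0 < x → x ≤ r → |f x| ≤ C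

/-- A function on `[0,∞) × (0,∞)` is locally bounded if it is bounded on the intersection of
`[0,∞) × (0,∞)` with every bounded set. -/
def LocBdd2 (φ : ℝ → ℝ → ℝ) : Prop :=
  ∀ r > 0, ∃ C, ∀ t x, 0 ≤ t → t ≤ r → 0 < x → x ≤ r → |φ t x| ≤ C

/-- Mild solution of the dual mitosis equation with initial datum `f`. -/
def IsMildSol (B f : ℝ → ℝ) (φ : ℝ → ℝ → ℝ) : Prop :=
  ∀ t ≥ 0, ∀ x > 0,
    φ t x = f (x * exp t) * Real.exp (-∫ s in (0:ℝ)..t, B (x * exp s))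
      + 2 * ∫ τ in (0:ℝ)..t,
          B (x * exp τ) * Real.exp (-∫ s in (0:ℝ)..τ, B (x * exp s)) * φ (t - τ) (x * exp τ / 2)

/-- `B : (0,∞) → [0,∞)` is continuous and bounded on some neighborhood of `0`. -/
def Bhyp (B : ℝ → ℝ) : Prop :=
  ContinuousOn B (Ioi 0) ∧ (∀ x > 0, 0 ≤ B x) ∧
    ∃ ε > 0, ∃ C, ∀ x, 0 < x → x < ε → B x ≤ C

/-- Assumption (A2) on the division rate: local integrability, support `[b,∞)`,
power-law bound near `0` and two-sided power-law bounds at infinity. -/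
def HypA2 (B : ℝ → ℝ) : Prop :=
  (∀ a b : ℝ, 0 < a → IntegrableOn B (Icc a b)) ∧
  (∃ b ≥ (0:ℝ), closure {x : ℝ | 0 < x ∧ B x ≠ 0} = Ici b) ∧
  (∃ b₀ > (0:ℝ), ∃ γ₀ > (0:ℝ), ∃ K₀ > (0:ℝ), ∀ x, 0 < x → x < b₀ → B x ≤ K₀ * x ^ γ₀) ∧
  (∃ b₁ > (0:ℝ), ∃ γ₁ > (0:ℝ), ∃ γ₂ > (0:ℝ), ∃ K₁ > (0:ℝ), ∃ K₂ > (0:ℝ),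
    ∀ x, b₁ < x → K₁ * x ^ γ₁ ≤ B x ∧ B x ≤ K₂ * x ^ γ₂)

/-- `U` is a continuously differentiable Perron eigenfunction (with derivative `U'`):
nonnegative, solves `(xU)' + (B+1)U = 4B(2x)U(2x)`, is normalized by `∫ x U = 1`,
and `x^r U` is bounded and integrable on `(0,∞)` for every real `r`. -/
def Perron (B U U' : ℝ → ℝ) : Prop :=
  (∀ x > 0, 0 ≤ U x) ∧
  (∀ x > 0, HasDerivAt U (U' x) x) ∧
  ContinuousOn U' (Ioi 0) ∧
  (∀ x > 0, (U x + x * U' x) + (B x + 1) * U x = 4 * B (2 * x) * U (2 * x)) ∧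
  (∫ x in Ioi (0:ℝ), x * U x) = 1 ∧
  (∀ r : ℝ, (∃ C, ∀ x > 0, x ^ r * U x ≤ C) ∧ IntegrableOn (fun x => x ^ r * U x) (Ioi 0))

/-- The boundary eigenvalue `λ_k = 1 + 2ikπ/log 2`. -/
def lambdak (k : ℤ) : ℂ :=
  1 + Complex.I * ((2 * (k : ℝ) * Real.pi / Real.log 2 : ℝ) : ℂ)

/-- The adjoint boundary eigenfunction `φ_k(x) = x · exp((2ikπ/log 2) log x)`. -/
def phik (k : ℤ) (x : ℝ) : ℂ :=
  (x : ℂ) * Complex.exp (Complex.I * ((2 * (k : ℝ) * Real.pi / Real.log 2 : ℝ) : ℂ)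
      * (Real.log x : ℂ))

/-- The boundary eigenfunction `U_k(x) = exp(-(2ikπ/log 2) log x) U(x)`. -/
def Uk (U : ℝ → ℝ) (k : ℤ) (x : ℝ) : ℂ :=
  Complex.exp (-(Complex.I * ((2 * (k : ℝ) * Real.pi / Real.log 2 : ℝ) : ℂ))
      * (Real.log x : ℂ)) * (U x : ℂ)

/-- The linear form `ν_k(f) = ∫₀^∞ U_k(x) f(x) dx` (complex-valued `f`). -/
def nuk (U : ℝ → ℝ) (k : ℤ) (f : ℝ → ℂ) : ℂ :=
  ∫ x in Ioi (0:ℝ), Uk U k x * f x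

namespace Stmt11Aux

def ew (a : ℝ) (x : ℝ) : ℂ := Complex.exp (Complex.I * (a : ℂ) * (Real.log x : ℂ))

lemma norm_ew (a x : ℝ) : ‖ew a x‖ = 1 := by
  rw [ew, Complex.norm_exp]
  simp [Complex.mul_re]

lemma continuousOn_ew (a : ℝ) : ContinuousOn (ew a) (Ioi 0) := by
  apply Complex.continuous_exp.comp_continuousOn
  apply ContinuousOn.mul continuousOn_const
  exact Complex.continuous_ofReal.comp_continuousOn
    (Real.continuousOn_log.mono (fun x hx => ne_of_gt hx))

lemma hasDerivAt_ew (a : ℝ) {x : ℝ} (hx : 0 < x) :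
    HasDerivAt (ew a) (Complex.I * a / x * ew a x) x := by
  have h1 : HasDerivAt (fun y : ℝ => ((Real.log y : ℝ) : ℂ)) ((x⁻¹ : ℝ) : ℂ) x :=
    (Real.hasDerivAt_log hx.ne').ofReal_comp
  have h2 : HasDerivAt (fun y : ℝ => Complex.I * (a : ℂ) * ((Real.log y : ℝ) : ℂ))
      (Complex.I * (a : ℂ) * ((x⁻¹ : ℝ) : ℂ)) x := h1.const_mul _
  have h3 := h2.cexp
  refine h3.congr_deriv ?_
  rw [ew]
  push_cast
  ring

lemma ew_two_mul (a : ℝ) (hexp : Complex.exp (Complex.I * (a : ℂ) * (Real.log 2 : ℂ)) = 1)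
    {x : ℝ} (hx : 0 < x) : ew a (2 * x) = ew a x := by
  rw [ew, ew, Real.log_mul two_ne_zero hx.ne']
  push_cast
  rw [mul_add, Complex.exp_add, hexp, one_mul]

lemma key (B : ℝ → ℝ) (hB : Bhyp B) (hB2 : HypA2 B) (U U' : ℝ → ℝ) (hU : Perron B U U')
    (a : ℝ) (ha : a ≠ 0)
    (hexp : Complex.exp (Complex.I * (a : ℂ) * (Real.log 2 : ℂ)) = 1) :
    (∫ x in Ioi (0:ℝ), ((x * U x : ℝ) : ℂ) * ew a x) = 0 := by
  obtain ⟨hBc, hB0, ε, hε, Cε, hBε⟩ := hB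
  obtain ⟨-, -, -, b₁, hb₁, γ₁, hγ₁, γ₂, hγ₂, K₁, hK₁, K₂, hK₂, hBpoly⟩ := hB2
  obtain ⟨hU0, hUd, hU'c, hode, hnorm, hpow⟩ := hU
  have hUc : ContinuousOn U (Ioi 0) := fun x hx => (hUd x hx).continuousAt.continuousWithinAt
  -- global bound on B : B x ≤ C * (1 + x ^ γ₂)
  obtain ⟨CB, hCB0, hCB⟩ : ∃ C, 0 ≤ C ∧ ∀ x, 0 < x → B x ≤ C * (1 + x ^ γ₂) := by
    have hcpt : IsCompact (Icc ε (b₁ + ε)) := isCompact_Icc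
    have hsub : Icc ε (b₁ + ε) ⊆ Ioi 0 := fun x hx => lt_of_lt_of_le hε hx.1
    obtain ⟨C₁, hC₁⟩ := hcpt.exists_bound_of_continuousOn (hBc.mono hsub)
    have h0Cε : 0 ≤ Cε := le_trans (hB0 (ε/2) (by linarith)) (hBε (ε/2) (by linarith) (by linarith))
    have hCge : 0 ≤ max (max Cε C₁) K₂ :=
      h0Cε.trans ((le_max_left Cε C₁).trans (le_max_left _ _))
    refine ⟨max (max Cε C₁) K₂, hCge, ?_⟩
    intro x hx
    have hrp : (0:ℝ) ≤ x ^ γ₂ := Real.rpow_nonneg hx.le _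
    rcases lt_or_ge x ε with hxε | hxε
    · calc B x ≤ max (max Cε C₁) K₂ :=
            (hBε x hx hxε).trans ((le_max_left Cε C₁).trans (le_max_left _ _))
        _ ≤ max (max Cε C₁) K₂ * (1 + x ^ γ₂) := le_mul_of_one_le_right hCge (by linarith)
    · rcases le_or_gt x (b₁ + ε) with hxb | hxb
      · have hx' : B x ≤ C₁ := (le_abs_self _).trans (hC₁ x ⟨hxε, hxb⟩)
        calc B x ≤ max (max Cε C₁) K₂ :=
              hx'.trans ((le_max_right Cε C₁).trans (le_max_left _ _))
          _ ≤ max (max Cε C₁) K₂ * (1 + x ^ γ₂) := le_mul_of_one_le_right hCge (by linarith)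
      · calc B x ≤ K₂ * x ^ γ₂ := (hBpoly x (by linarith)).2
          _ ≤ max (max Cε C₁) K₂ * x ^ γ₂ :=
            mul_le_mul_of_nonneg_right (le_max_right _ _) hrp
          _ ≤ max (max Cε C₁) K₂ * (1 + x ^ γ₂) := by nlinarith
  -- the four complex integrands
  set f₁ : ℝ → ℂ := fun x => ((x * U x : ℝ) : ℂ) * ew a x with hf₁def
  set f₂ : ℝ → ℂ := fun x => ((B x * (x * U x) : ℝ) : ℂ) * ew a x with hf₂def
  set f₃ : ℝ → ℂ := fun x => ((4 * B (2 * x) * U (2 * x) * x : ℝ) : ℂ) * ew a x with hf₃def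
  set fD : ℝ → ℂ := fun x => ((x * (U x + x * U' x) : ℝ) : ℂ) * ew a x with hfDdef
  -- comparison principle for integrability
  have hcompare : ∀ g h : ℝ → ℝ, ContinuousOn g (Ioi 0) → IntegrableOn h (Ioi 0) →
      (∀ x ∈ Ioi (0:ℝ), |g x| ≤ h x) →
      IntegrableOn (fun x => ((g x : ℝ) : ℂ) * ew a x) (Ioi 0) := by
    intro g h hg hh hbd
    apply Integrable.mono' hh
    · exact ((Complex.continuous_ofReal.comp_continuousOn hg).mul
        (continuousOn_ew a)).aestronglyMeasurable measurableSet_Ioi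
    · filter_upwards [ae_restrict_mem measurableSet_Ioi] with x hx
      rw [norm_mul, norm_ew, mul_one, Complex.norm_real, Real.norm_eq_abs]
      exact hbd x hx
  -- integrability of f₁
  have hint₁ : IntegrableOn f₁ (Ioi 0) := by
    apply hcompare (fun x => x * U x) (fun x => x ^ (1:ℝ) * U x)
      (continuousOn_id.mul hUc) (hpow 1).2
    intro x hx
    rw [abs_of_nonneg (mul_nonneg (le_of_lt hx) (hU0 x hx)), Real.rpow_one]
  -- integrability of the real weight B x * (x * U x)
  have hBxU : IntegrableOn (fun x => B x * (x * U x)) (Ioi 0) := by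
    have hhint : IntegrableOn
        (fun x => CB * (x ^ (1:ℝ) * U x) + CB * (x ^ ((1:ℝ) + γ₂) * U x)) (Ioi 0) :=
      ((hpow 1).2.const_mul CB).add ((hpow (1 + γ₂)).2.const_mul CB)
    apply Integrable.mono' hhint
    · exact ((hBc.mul (continuousOn_id.mul hUc))).aestronglyMeasurable measurableSet_Ioi
    · filter_upwards [ae_restrict_mem measurableSet_Ioi] with x hx
      have hx0 : (0:ℝ) < x := hx
      have hU0x := hU0 x hx0
      have hB0x := hB0 x hx0
      rw [Real.norm_eq_abs, abs_of_nonneg (mul_nonneg hB0x (mul_nonneg hx0.le hU0x))]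
      have h2 : x ^ ((1:ℝ) + γ₂) = x ^ (1:ℝ) * x ^ γ₂ := Real.rpow_add hx0 _ _
      rw [h2, Real.rpow_one]
      calc B x * (x * U x) ≤ CB * (1 + x ^ γ₂) * (x * U x) :=
            mul_le_mul_of_nonneg_right (hCB x hx0) (mul_nonneg hx0.le hU0x)
        _ = CB * (x * U x) + CB * (x * x ^ γ₂ * U x) := by ring
  -- integrability of f₂
  have hint₂ : IntegrableOn f₂ (Ioi 0) := by
    apply hcompare (fun x => B x * (x * U x)) (fun x => B x * (x * U x))
      (hBc.mul (continuousOn_id.mul hUc)) hBxU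
    intro x hx
    have hx0 : (0:ℝ) < x := hx
    rw [abs_of_nonneg (mul_nonneg (hB0 x hx0) (mul_nonneg hx0.le (hU0 x hx0)))]
  -- integrability of f₃
  have hmaps : MapsTo (fun x : ℝ => 2 * x) (Ioi 0) (Ioi 0) := fun x hx => by
    simp only [mem_Ioi] at hx ⊢; linarith
  have h2xc : ContinuousOn (fun x : ℝ => 2 * x) (Ioi 0) :=
    (continuous_const.mul continuous_id).continuousOn
  have hBxU2 : IntegrableOn (fun x => B (2*x) * ((2*x) * U (2*x))) (Ioi 0) := by
    have := (integrableOn_Ioi_comp_mul_left_iff (fun y => B y * (y * U y)) 0 two_pos).mpr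
      (by simpa using hBxU)
    simpa using this
  have hint₃ : IntegrableOn f₃ (Ioi 0) := by
    apply hcompare (fun x => 4 * B (2 * x) * U (2 * x) * x)
      (fun x => 2 * (B (2*x) * ((2*x) * U (2*x))))
      (((continuousOn_const.mul (hBc.comp h2xc hmaps)).mul
        (hUc.comp h2xc hmaps)).mul continuousOn_id) (hBxU2.const_mul 2)
    intro x hx
    have hx0 : (0:ℝ) < x := hx
    have h2x0 : (0:ℝ) < 2 * x := by linarith
    rw [abs_of_nonneg (mul_nonneg (mul_nonneg (mul_nonneg (by norm_num) (hB0 _ h2x0))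
      (hU0 _ h2x0)) hx0.le)]
    exact le_of_eq (by ring)
  -- pointwise ODE identity
  have hptwise : ∀ x ∈ Ioi (0:ℝ), fD x = f₃ x - f₂ x - f₁ x := by
    intro x hx
    have hx0 : (0:ℝ) < x := hx
    have hr : x * (U x + x * U' x)
        = 4 * B (2*x) * U (2*x) * x - B x * (x * U x) - x * U x := by
      have := hode x hx0
      nlinarith [this]
    simp only [hf₁def, hf₂def, hf₃def, hfDdef, hr]
    push_cast
    ring
  -- integrability of fD
  have hintD : IntegrableOn fD (Ioi 0) := by
    apply IntegrableOn.congr_fun ((hint₃.sub hint₂).sub hint₁) _ measurableSet_Ioi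
    intro x hx
    exact (hptwise x hx).symm
  -- the antiderivative H and its derivative
  set H : ℝ → ℂ := fun x => ((x * U x : ℝ) : ℂ) * ((x:ℂ) * ew a x) with hHdef
  set H' : ℝ → ℂ := fun x => fD x + (1 + Complex.I * a) * f₁ x with hH'def
  have hHderiv : ∀ x ∈ Ioi (0:ℝ), HasDerivAt H (H' x) x := by
    intro x hx
    have hx0 : (0:ℝ) < x := hx
    have hxC : (x:ℂ) ≠ 0 := by exact_mod_cast hx0.ne'
    have h1 : HasDerivAt (fun y : ℝ => ((y * U y : ℝ) : ℂ)) ((U x + x * U' x : ℝ) : ℂ) x := by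
      have := ((hasDerivAt_id x).mul (hUd x hx0)).ofReal_comp
      simpa using this
    have hof : HasDerivAt (fun y : ℝ => (y:ℂ)) 1 x := by
      simpa using (hasDerivAt_id x).ofReal_comp
    have h2 : HasDerivAt (fun y : ℝ => (y:ℂ) * ew a y) ((1 + Complex.I * a) * ew a x) x := by
      have := hof.mul (hasDerivAt_ew a hx0)
      refine this.congr_deriv ?_
      rw [div_mul_eq_mul_div, mul_div_assoc', mul_div_cancel_left₀ _ hxC]
      ring
    have hmul := h1.mul h2
    have hgoal : H' x = ((U x + x * U' x : ℝ) : ℂ) * ((x:ℂ) * ew a x)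
        + ((x * U x : ℝ) : ℂ) * ((1 + Complex.I * a) * ew a x) := by
      simp only [hH'def, hfDdef, hf₁def]
      push_cast
      ring
    rw [hgoal]
    exact hmul
  -- integrability of H'
  have hintH' : IntegrableOn H' (Ioi 0) := hintD.add (hint₁.const_mul _)
  -- decay at infinity
  obtain ⟨C₃, hC₃⟩ := (hpow 3).1
  obtain ⟨C₀, hC₀⟩ := (hpow 0).1
  have hnormH : ∀ x : ℝ, 0 < x → ‖H x‖ = x * U x * x := by
    intro x hx0
    simp only [hHdef]
    rw [norm_mul, norm_mul, norm_ew, mul_one, Complex.norm_real, Real.norm_eq_abs,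
      Complex.norm_real, Real.norm_eq_abs]
    rw [abs_of_nonneg (mul_nonneg hx0.le (hU0 x hx0)), abs_of_nonneg hx0.le]
  have hHtop : Tendsto H atTop (𝓝 0) := by
    apply squeeze_zero_norm' (a := fun x => C₃ * x⁻¹)
    · filter_upwards [eventually_ge_atTop (1:ℝ)] with x hx1
      have hx0 : (0:ℝ) < x := lt_of_lt_of_le one_pos hx1
      rw [hnormH x hx0]
      have h3 : x * x * x * U x ≤ C₃ := by
        have := hC₃ x hx0
        rwa [show (3:ℝ) = ((3:ℕ):ℝ) by norm_num, Real.rpow_natCast, pow_succ, pow_two] at this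
      rw [show x * U x * x = (x * x * x * U x) * x⁻¹ by field_simp]
      exact mul_le_mul_of_nonneg_right h3 (inv_nonneg.2 hx0.le)
    · simpa using tendsto_inv_atTop_zero.const_mul C₃
  have hHzero : Tendsto H (𝓝[>] (0:ℝ)) (𝓝 0) := by
    apply squeeze_zero_norm' (a := fun x => C₀ * (x * x))
    · filter_upwards [self_mem_nhdsWithin] with x hx
      have hx0 : (0:ℝ) < x := hx
      rw [hnormH x hx0]
      have h0 : U x ≤ C₀ := by
        have := hC₀ x hx0
        rwa [Real.rpow_zero, one_mul] at this
      nlinarith [hU0 x hx0]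
    · have : Tendsto (fun x : ℝ => C₀ * (x * x)) (𝓝 0) (𝓝 (C₀ * (0 * 0))) :=
        (continuous_const.mul (continuous_id.mul continuous_id)).tendsto 0
      simpa using this.mono_left nhdsWithin_le_nhds
  -- FTC : the integral of H' over (0,∞) vanishes
  have hEftc : (∫ x in Ioi (0:ℝ), H' x) = 0 := by
    have hIoc : IntegrableOn H' (Ioc 0 1) := hintH'.mono_set Ioc_subset_Ioi_self
    have hIoi1 : IntegrableOn H' (Ioi 1) := hintH'.mono_set (Ioi_subset_Ioi zero_le_one)
    have hsplit : (∫ x in Ioi (0:ℝ), H' x)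
        = (∫ x in Ioc (0:ℝ) 1, H' x) + ∫ x in Ioi (1:ℝ), H' x := by
      rw [← setIntegral_union (Ioc_disjoint_Ioi le_rfl) measurableSet_Ioi hIoc hIoi1,
        Ioc_union_Ioi_eq_Ioi zero_le_one]
    have hpart1 : (∫ x in Ioc (0:ℝ) 1, H' x) = H 1 - 0 := by
      rw [← intervalIntegral.integral_of_le zero_le_one]
      apply intervalIntegral.integral_eq_sub_of_hasDerivAt_of_tendsto zero_lt_one
      · intro x hx
        exact hHderiv x (mem_Ioi.mpr hx.1)
      · rw [intervalIntegrable_iff_integrableOn_Ioc_of_le zero_le_one]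
        exact hIoc
      · exact hHzero
      · exact ((hHderiv 1 (mem_Ioi.mpr one_pos)).continuousAt.tendsto).mono_left nhdsWithin_le_nhds
    have hpart2 : (∫ x in Ioi (1:ℝ), H' x) = 0 - H 1 := by
      apply integral_Ioi_of_hasDerivAt_of_tendsto'
        (fun x hx => hHderiv x (mem_Ioi.mpr (lt_of_lt_of_le one_pos hx))) hIoi1 hHtop
    rw [hsplit, hpart1, hpart2]; ring
  -- linearity
  have hElin : (∫ x in Ioi (0:ℝ), H' x)
      = (∫ x in Ioi (0:ℝ), fD x) + (1 + Complex.I * a) * ∫ x in Ioi (0:ℝ), f₁ x := by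
    simp only [hH'def]
    rw [integral_add hintD (hint₁.const_mul _), integral_const_mul]
  -- the ODE identity under the integral
  have hED : (∫ x in Ioi (0:ℝ), fD x)
      = (∫ x in Ioi (0:ℝ), f₃ x) - (∫ x in Ioi (0:ℝ), f₂ x) - ∫ x in Ioi (0:ℝ), f₁ x := by
    have hint₃₂ : IntegrableOn (fun x => f₃ x - f₂ x) (Ioi 0) := hint₃.sub hint₂
    rw [setIntegral_congr_fun measurableSet_Ioi hptwise, integral_sub hint₃₂ hint₁,
      integral_sub hint₃ hint₂]
  -- change of variables y = 2x
  have hE43 : (∫ x in Ioi (0:ℝ), f₃ x) = ∫ x in Ioi (0:ℝ), f₂ x := by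
    have hptw : ∀ x ∈ Ioi (0:ℝ), f₃ x = (2:ℝ) • f₂ (2 * x) := by
      intro x hx
      have hx0 : (0:ℝ) < x := hx
      simp only [hf₂def, hf₃def, ew_two_mul a hexp hx0, Complex.real_smul]
      push_cast
      ring
    rw [setIntegral_congr_fun measurableSet_Ioi hptw, integral_smul,
      integral_comp_mul_left_Ioi f₂ 0 two_pos]
    rw [smul_smul, mul_zero]
    norm_num
  -- assemble
  have hfin : Complex.I * (a:ℂ) * (∫ x in Ioi (0:ℝ), f₁ x) = 0 := by
    rw [hElin, hED, hE43] at hEftc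
    linear_combination hEftc
  have hIa : Complex.I * (a:ℂ) ≠ 0 :=
    mul_ne_zero Complex.I_ne_zero (Complex.ofReal_ne_zero.mpr ha)
  exact (mul_eq_zero.mp hfin).resolve_left hIa

end Stmt11Aux

/-- Biorthogonality: `∫₀^∞ x e^{(2imπ/log 2) log x} U(x) dx = 0` for `m ≠ 0`; equivalently
`ν_k(φ_l) = δ_{kl}`. -/


theorem stmt11 (B : ℝ → ℝ) (hB : Bhyp B) (hB2 : HypA2 B)
    (U U' : ℝ → ℝ) (hU : Perron B U U') :
    (∀ m : ℤ, m ≠ 0 → (∫ x in Ioi (0:ℝ), phik m x * (U x : ℂ)) = 0) ∧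
    (∀ k l : ℤ, nuk U k (phik l) = if k = l then 1 else 0) := by
  have hlog2 : Real.log 2 ≠ 0 := ne_of_gt (Real.log_pos one_lt_two)
  have hlog2C : (Real.log 2 : ℂ) ≠ 0 := Complex.ofReal_ne_zero.mpr hlog2
  have hpart1 : ∀ m : ℤ, m ≠ 0 → (∫ x in Ioi (0:ℝ), phik m x * (U x : ℂ)) = 0 := by
    intro m hm
    set a : ℝ := 2 * (m : ℝ) * Real.pi / Real.log 2 with hadef
    have ha : a ≠ 0 := by
      apply div_ne_zero _ hlog2
      exact mul_ne_zero (mul_ne_zero two_ne_zero (Int.cast_ne_zero.mpr hm)) Real.pi_ne_zero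
    have hexp : Complex.exp (Complex.I * (a : ℂ) * (Real.log 2 : ℂ)) = 1 := by
      have hr : a * Real.log 2 = 2 * (m : ℝ) * Real.pi := by
        rw [hadef]; field_simp
      have harg : Complex.I * (a : ℂ) * (Real.log 2 : ℂ) = (m : ℂ) * (2 * Real.pi * Complex.I) := by
        rw [mul_assoc, ← Complex.ofReal_mul, hr]
        push_cast
        ring
      rw [harg]
      exact Complex.exp_int_mul_two_pi_mul_I m
    have h1 : ∀ x : ℝ, phik m x * (U x : ℂ) = ((x * U x : ℝ) : ℂ) * Stmt11Aux.ew a x := by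
      intro x
      rw [phik, Stmt11Aux.ew, hadef]
      push_cast
      ring
    simp only [h1]
    exact Stmt11Aux.key B hB hB2 U U' hU a ha hexp
  refine ⟨hpart1, ?_⟩
  intro k l
  by_cases hkl : k = l
  · subst hkl
    rw [if_pos rfl, nuk]
    have h2 : ∀ x ∈ Ioi (0:ℝ), Uk U k x * phik k x = ((x * U x : ℝ) : ℂ) := by
      intro x hx
      set θ : ℂ := ((2 * (k : ℝ) * Real.pi / Real.log 2 : ℝ) : ℂ)
      set L : ℂ := (Real.log x : ℂ)
      have hsplit : Uk U k x * phik k x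
          = ((x : ℂ) * (U x : ℂ)) * Complex.exp (-(Complex.I * θ) * L + Complex.I * θ * L) := by
        rw [Complex.exp_add, Uk, phik]
        ring
      rw [hsplit, show -(Complex.I * θ) * L + Complex.I * θ * L = 0 by ring,
        Complex.exp_zero, mul_one]
      push_cast
      ring
    rw [setIntegral_congr_fun measurableSet_Ioi h2]
    have hcast : (∫ x in Ioi (0:ℝ), ((x * U x : ℝ) : ℂ))
        = ((∫ x in Ioi (0:ℝ), x * U x : ℝ) : ℂ) := integral_ofReal
    rw [hcast, hU.2.2.2.2.1, Complex.ofReal_one]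
  · rw [if_neg hkl, nuk]
    have h2 : ∀ x ∈ Ioi (0:ℝ), Uk U k x * phik l x = phik (l - k) x * (U x : ℂ) := by
      intro x hx
      set θk : ℂ := ((2 * (k : ℝ) * Real.pi / Real.log 2 : ℝ) : ℂ) with hθk
      set θl : ℂ := ((2 * (l : ℝ) * Real.pi / Real.log 2 : ℝ) : ℂ) with hθl
      set L : ℂ := (Real.log x : ℂ)
      have hsplit : Uk U k x * phik l x
          = (x : ℂ) * Complex.exp (-(Complex.I * θk) * L + Complex.I * θl * L) * (U x : ℂ) := by
        rw [Complex.exp_add, Uk, phik]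
        ring
      have hθ : -(Complex.I * θk) * L + Complex.I * θl * L
          = Complex.I * ((2 * ((l - k : ℤ) : ℝ) * Real.pi / Real.log 2 : ℝ) : ℂ) * L := by
        rw [hθk, hθl]
        push_cast
        field_simp
        ring
      rw [hsplit, hθ, phik]
    rw [setIntegral_congr_fun measurableSet_Ioi h2]
    exact hpart1 (l - k) (sub_ne_zero.mpr (Ne.symm hkl))
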